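/- arXiv:math/0208222 — 6 statements merged into one kernel-verified Lean document; each statement's English description precedes it below -/
import Mathlib

section
/- Let (C, F) be a pointed connected atomic site such that F is representable by an object A (there is a natural isomorphism Hom(A, −) ≅ F). Then every morphism X ⟶ A of C is an isomorphism; in particular every endomorphism of A is an automorphism, so Aut(A) = Hom(A, A); and if B is any other object representing F, then A is isomorphic to B. -/
open CategoryTheory Opposite

universe u v

/-- A pointed connected atomic site: a small category `C` together with a
set-valued functor `F` such that (i) every morphism is a strict epimorphism,
(ii) every `F X` is nonempty, (iii) `F` sends morphisms to surjections, and
(iv) the category of elements of `F` is cofiltered. -/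
structure IsPCAS {C : Type u} [Category.{v} C] (F : C ⥤ Type v) : Prop where
  strict_epi : ∀ {Y X Z : C} (f : Y ⟶ X) (g : Y ⟶ Z),
    (∀ {W : C} (p q : W ⟶ Y), p ≫ f = q ≫ f → p ≫ g = q ≫ g) →
    ∃! u : X ⟶ Z, f ≫ u = g
  nonempty : ∀ X : C, Nonempty (F.obj X)
  surjective : ∀ {X Y : C} (f : X ⟶ Y), Function.Surjective (F.map f)
  cofiltered : IsCofiltered F.Elements

/-- If `(C, F)` is a pointed connected atomic site with `F` representable by
`A`, then every morphism into `A` is an isomorphism (in particular every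
endomorphism of `A` is an automorphism, so `Aut(A) = Hom(A, A)`), and any two
representing objects are isomorphic. -/
theorem stmt6 {C : Type u} [Category.{v} C] (F : C ⥤ Type v)
    (hF : IsPCAS F) (A : C) (θ : coyoneda.obj (op A) ≅ F) :
    (∀ (X : C) (f : X ⟶ A), IsIso f) ∧
    (∀ f : A ⟶ A, IsIso f) ∧
    (∀ B : C, (coyoneda.obj (op B) ≅ F) → Nonempty (A ≅ B)) := by
  have main : ∀ (X : C) (f : X ⟶ A), IsIso f := by
    intro X f
    -- find a section s : A ⟶ X with s ≫ f = 𝟙 A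
    obtain ⟨y, hy⟩ := hF.surjective f (θ.hom.app A (𝟙 A))
    obtain ⟨s, hs⟩ : ∃ s : A ⟶ X, θ.hom.app X s = y :=
      ⟨θ.inv.app X y, FunctorToTypes.inv_hom_id_app_apply θ X y⟩
    have hsec : s ≫ f = 𝟙 A := by
      have hnat := FunctorToTypes.naturality θ.hom f s
      change θ.hom.app A (s ≫ f) = F.map f (θ.hom.app X s) at hnat
      have : θ.hom.app A (s ≫ f) = θ.hom.app A (𝟙 A) := by
        rw [hnat, hs, hy]
      have hinj : Function.Injective (θ.hom.app A) := by
        intro a b hab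
        have := congrArg (θ.inv.app A) hab
        simpa [FunctorToTypes.hom_inv_id_app_apply θ A a, FunctorToTypes.hom_inv_id_app_apply θ A b] using this
      exact hinj this
    -- s is mono
    have hmono : ∀ {W : C} (p q : W ⟶ A), p ≫ s = q ≫ s → p = q := by
      intro W p q h
      have := congrArg (· ≫ f) h
      simpa [Category.assoc, hsec] using this
    -- s is epi (from strict_epi uniqueness)
    have hepi : ∀ {Z : C} (a b : X ⟶ Z), s ≫ a = s ≫ b → a = b := by
      intro Z a b h
      obtain ⟨u, _, huniq⟩ := hF.strict_epi s (s ≫ a)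
        (fun {W} p q hpq => by rw [← Category.assoc, ← Category.assoc, hmono p q hpq])
      have ha := huniq a rfl
      have hb := huniq b h.symm
      rw [ha, hb]
    -- s has a retraction u with s ≫ u = 𝟙 A, hence s iso, hence f iso
    obtain ⟨u, hu, _⟩ := hF.strict_epi s (𝟙 A) (fun {W} p q hpq => by
      simpa using hmono p q hpq)
    have hus : u ≫ s = 𝟙 X := by
      apply hepi
      rw [← Category.assoc, hu, Category.id_comp, Category.comp_id]
    have hsiso : IsIso s := ⟨u, hu, hus⟩
    -- f = inv s
    have : f = inv s := IsIso.eq_inv_of_hom_inv_id hsec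
    rw [this]
    infer_instance
  refine ⟨main, fun f => main A f, fun B θ' => ?_⟩
  obtain ⟨x⟩ := hF.nonempty A
  let g : B ⟶ A := θ'.inv.app A x
  have : IsIso g := main B g
  exact ⟨(asIso g).symm⟩
end

section
/- Let (C, F) be a pointed connected atomic site such that F is representable by an object A. Then for every object X the right action of Aut(A) on Hom(A, X) by precomposition is transitive: for every pair of morphisms x, y : A ⟶ X there exists an automorphism h of A with h ≫ x = y. -/
open CategoryTheory Opposite

universe u v

/-- Surjectivity of `F.map f` transports along `θ` to surjectivity of
precomposition on hom-sets out of `A`. -/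
lemma precomp_surj {C : Type u} [Category.{v} C] (F : C ⥤ Type v)
    (hF : IsPCAS F) (A : C) (θ : coyoneda.obj (op A) ≅ F)
    {X Y : C} (f : X ⟶ Y) (t : A ⟶ Y) : ∃ w : A ⟶ X, w ≫ f = t := by
  obtain ⟨a, ha⟩ := hF.surjective f (θ.hom.app Y t)
  refine ⟨θ.inv.app X a, ?_⟩
  have hinj : Function.Injective (θ.hom.app Y) := by
    intro u v huv
    have := congrArg (θ.inv.app Y) huv
    simpa using this
  apply hinj
  have hnat := θ.hom.naturality_apply f (θ.inv.app X a)
  change θ.hom.app Y (θ.inv.app X a ≫ f) = _ at hnat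
  have : θ.hom.app X (θ.inv.app X a) = a := by simp
  rw [hnat, this, ha]

/-- Every endomorphism of the representing object `A` is an isomorphism. -/
lemma endo_isIso {C : Type u} [Category.{v} C] (F : C ⥤ Type v)
    (hF : IsPCAS F) (A : C) (θ : coyoneda.obj (op A) ≅ F)
    (e : A ⟶ A) : IsIso e := by
  obtain ⟨s, hs⟩ := precomp_surj F hF A θ e (𝟙 A)
  -- `s ≫ e = 𝟙 A`; show `e ≫ s = 𝟙 A` using that `s` is a strict epi.
  obtain ⟨u, -, huniq⟩ := hF.strict_epi s s (fun p q h => h)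
  have h1 : e ≫ s = u := huniq (e ≫ s) (by simp only []; rw [← Category.assoc, hs, Category.id_comp])
  have h2 : 𝟙 A = u := huniq (𝟙 A) (Category.comp_id s)
  exact ⟨s, h1.trans h2.symm, hs⟩

/-- If `(C, F)` is a pointed connected atomic site with `F` representable by
`A`, then the right action of `Aut(A)` on `Hom(A, X)` by precomposition is
transitive for every object `X`. -/
theorem stmt7 {C : Type u} [Category.{v} C] (F : C ⥤ Type v)
    (hF : IsPCAS F) (A : C) (θ : coyoneda.obj (op A) ≅ F) :
    ∀ (X : C) (x y : A ⟶ X), ∃ h : Aut A, h.hom ≫ x = y := by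
  intro X x y
  obtain ⟨w, hw⟩ := precomp_surj F hF A θ x y
  have := endo_isIso F hF A θ w
  exact ⟨asIso w, hw⟩
end

section
/- Let (C, F) be a pointed connected atomic site such that F is representable by an object A. For any morphism x : A ⟶ X, let H = { h ∈ Aut(A) | h ≫ x = x }. Then x exhibits X as the categorical quotient of A by the action of H: for every object Z and every morphism g : A ⟶ Z satisfying h ≫ g = g for all h ∈ H, there exists a unique morphism u : X ⟶ Z with x ≫ u = g. -/
open CategoryTheory Opposite

universe u v

/-- If `(C, F)` is a pointed connected atomic site with `F` representable by
`A`, then every arrow `x : A ⟶ X` is the categorical quotient of `A` by the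
action of the stabilizer `H = { h ∈ Aut(A) | h ≫ x = x }`: every `g : A ⟶ Z`
invariant under `H` factors uniquely through `x`. -/
theorem stmt8 {C : Type u} [Category.{v} C] (F : C ⥤ Type v)
    (hF : IsPCAS F) (A : C) (θ : coyoneda.obj (op A) ≅ F) :
    ∀ {X Z : C} (x : A ⟶ X) (g : A ⟶ Z),
      (∀ h : Aut A, h.hom ≫ x = x → h.hom ≫ g = g) →
      ∃! u : X ⟶ Z, x ≫ u = g := by
  -- Every morphism is an epimorphism.
  have epi : ∀ {Y X : C} (f : Y ⟶ X) {Z : C} (u v : X ⟶ Z),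
      f ≫ u = f ≫ v → u = v := by
    intro Y X f Z u v huv
    obtain ⟨w, -, hw⟩ := hF.strict_epi f (f ≫ u)
      (fun p q h => by rw [← Category.assoc, ← Category.assoc, h])
    rw [hw u rfl, hw v huv.symm]
  -- Precomposition with any morphism from `A` corresponds to `F.map`.
  have key : ∀ {X Y : C} (e : X ⟶ Y) (t : A ⟶ X),
      θ.inv.app Y (F.map e (θ.hom.app X t)) = t ≫ e := by
    intro X Y e t
    have h1 := NatTrans.naturality_apply θ.inv e (θ.hom.app X t)
    simp only [types_comp_apply] at h1 ⊢
    rw [h1]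
    have : θ.inv.app X (θ.hom.app X t) = t := Iso.hom_inv_id_app_apply θ X t
    rw [this]; rfl
  -- Every endomorphism of `A` is an isomorphism.
  have endo_iso : ∀ e : A ⟶ A, IsIso e := by
    intro e
    obtain ⟨z, hz⟩ := hF.surjective e (θ.hom.app A (𝟙 A))
    set t : A ⟶ A := θ.inv.app A z with ht
    have hsec : t ≫ e = 𝟙 A := by
      have h1 : θ.inv.app A (F.map e (θ.hom.app A t)) = t ≫ e := key e t
      have h2 : θ.hom.app A t = z := Iso.inv_hom_id_app_apply θ A z
      rw [h2, hz] at h1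
      have h3 : θ.inv.app A (θ.hom.app A (𝟙 A)) = 𝟙 A :=
        Iso.hom_inv_id_app_apply θ A (𝟙 A)
      rw [h3] at h1; exact h1.symm
    have hretr : e ≫ t = 𝟙 A := by
      apply epi t
      rw [← Category.assoc, hsec, Category.id_comp, Category.comp_id]
    exact ⟨t, hretr, hsec⟩
  intro X Z x g hinv
  apply hF.strict_epi x g
  intro W p q hpq
  -- choose a point of W
  obtain ⟨ζ⟩ := hF.nonempty W
  set a : A ⟶ W := θ.inv.app W ζ with ha
  set r : A ⟶ A := a ≫ p with hr
  set s : A ⟶ A := a ≫ q with hs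
  have hrx : r ≫ x = s ≫ x := by
    rw [hr, hs, Category.assoc, Category.assoc, hpq]
  have := endo_iso r; have := endo_iso s
  let h : Aut A := (asIso s).symm ≪≫ asIso r
  have hhom : h.hom = inv s ≫ r := by
    simp [h]
  have hx : h.hom ≫ x = x := by
    rw [hhom, Category.assoc, hrx, IsIso.inv_hom_id_assoc]
  have hg := hinv h hx
  have hg' : r ≫ g = s ≫ g := by
    have : inv s ≫ r ≫ g = g := by rw [← Category.assoc, ← hhom, hg]
    calc r ≫ g = s ≫ inv s ≫ r ≫ g := by rw [IsIso.hom_inv_id_assoc]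
    _ = s ≫ g := by rw [this]
  apply epi a
  simpa [hr, hs, Category.assoc] using hg'
end

section
/- (Lifting lemma, discrete case.) Let (C, F) be a pointed connected atomic site such that F is representable by an object A. Given morphisms x : A ⟶ X and y : A ⟶ Y such that every automorphism h of A with h ≫ x = x also satisfies h ≫ y = y (the stabilizer of x in Aut(A) is contained in the stabilizer of y), there exists a unique morphism u : X ⟶ Y with x ≫ u = y. -/
open CategoryTheory Opposite

universe u v

/-- Lifting lemma, discrete case: if `(C, F)` is a pointed connected atomic
site with `F` representable by `A`, and `x : A ⟶ X`, `y : A ⟶ Y` are such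
that the stabilizer of `x` in `Aut(A)` is contained in the stabilizer of `y`,
then there is a unique `u : X ⟶ Y` with `x ≫ u = y`. -/
theorem stmt9 {C : Type u} [Category.{v} C] (F : C ⥤ Type v)
    (hF : IsPCAS F) (A : C) (θ : coyoneda.obj (op A) ≅ F) :
    ∀ {X Y : C} (x : A ⟶ X) (y : A ⟶ Y),
      (∀ h : Aut A, h.hom ≫ x = x → h.hom ≫ y = y) →
      ∃! u : X ⟶ Y, x ≫ u = y := by
  intro X Y x y hstab
  -- Every morphism `A ⟶ Q` factors through any morphism `f : P ⟶ Q`.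
  have surj : ∀ {P Q : C} (f : P ⟶ Q) (h : A ⟶ Q), ∃ g : A ⟶ P, g ≫ f = h := by
    intro P Q f h
    obtain ⟨e, he⟩ := hF.surjective f (θ.hom.app Q h)
    refine ⟨θ.inv.app P e, ?_⟩
    have hnat := NatTrans.naturality_apply θ.hom f (θ.inv.app P e)
    simp only [Functor.flip_obj_obj, Functor.flip_obj_map, yoneda_map_app] at hnat
    have h1 : θ.hom.app P (θ.inv.app P e) = e :=
      Iso.inv_hom_id_app_apply θ P e
    rw [h1, he] at hnat
    have := congrArg (θ.inv.app Q) hnat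
    simpa using this
  -- There is a morphism from `A` to any object.
  have pt : ∀ P : C, ∃ a : A ⟶ P, True := fun P =>
    ⟨θ.inv.app P (hF.nonempty P).some, trivial⟩
  -- Every morphism is an epimorphism.
  have epi : ∀ {P Q : C} (f : P ⟶ Q) {Z : C} (m n : Q ⟶ Z),
      f ≫ m = f ≫ n → m = n := by
    intro P Q f Z m n hmn
    obtain ⟨u, -, hu⟩ := hF.strict_epi f (f ≫ m)
      (fun {W} p q hpq => by rw [← Category.assoc, hpq, Category.assoc])
    exact (hu m rfl).trans (hu n hmn.symm).symm
  -- Every endomorphism of `A` is an automorphism.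
  have auto : ∀ e : A ⟶ A, ∃ s : A ⟶ A, s ≫ e = 𝟙 A ∧ e ≫ s = 𝟙 A := by
    intro e
    obtain ⟨s, hs⟩ := surj e (𝟙 A)
    obtain ⟨r, hr⟩ := surj s (𝟙 A)
    refine ⟨s, hs, ?_⟩
    calc e ≫ s = (r ≫ s) ≫ e ≫ s := by rw [hr, Category.id_comp]
    _ = r ≫ (s ≫ e) ≫ s := by simp only [Category.assoc]
    _ = 𝟙 A := by rw [hs, Category.id_comp, hr]
  apply hF.strict_epi x y
  intro W p q hpq
  obtain ⟨a, -⟩ := pt W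
  obtain ⟨hinv, hh1, hh2⟩ := auto (a ≫ p)
  obtain ⟨kinv, hk1, hk2⟩ := auto (a ≫ q)
  -- The automorphism `kinv ≫ a ≫ p` stabilizes `x`.
  set g : Aut A := ⟨kinv ≫ a ≫ p, hinv ≫ a ≫ q, by
      calc (kinv ≫ a ≫ p) ≫ hinv ≫ a ≫ q
          = kinv ≫ ((a ≫ p) ≫ hinv) ≫ a ≫ q := by simp only [Category.assoc]
        _ = kinv ≫ a ≫ q := by rw [hh2, Category.id_comp]
        _ = 𝟙 A := hk1, by
      calc (hinv ≫ a ≫ q) ≫ kinv ≫ a ≫ p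
          = hinv ≫ ((a ≫ q) ≫ kinv) ≫ a ≫ p := by simp only [Category.assoc]
        _ = hinv ≫ a ≫ p := by rw [hk2, Category.id_comp]
        _ = 𝟙 A := hh1⟩ with hg
  have hgx : g.hom ≫ x = x := by
    calc g.hom ≫ x = kinv ≫ a ≫ p ≫ x := by simp [hg, Category.assoc]
      _ = kinv ≫ a ≫ q ≫ x := by rw [hpq]
      _ = (kinv ≫ (a ≫ q)) ≫ x := by simp only [Category.assoc]
      _ = x := by rw [hk1, Category.id_comp]
  have hgy := hstab g hgx
  have key : a ≫ p ≫ y = a ≫ q ≫ y := by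
    have : (a ≫ q) ≫ g.hom ≫ y = (a ≫ q) ≫ y := by rw [hgy]
    calc a ≫ p ≫ y = ((a ≫ q) ≫ kinv) ≫ a ≫ p ≫ y := by
          rw [hk2, Category.id_comp]
      _ = (a ≫ q) ≫ g.hom ≫ y := by simp only [hg, Category.assoc]
      _ = (a ≫ q) ≫ y := this
      _ = a ≫ q ≫ y := by simp only [Category.assoc]
  have := epi a (p ≫ y) (q ≫ y) key
  exact this
end

section
/- Let (C, F) be a pointed connected atomic site such that F is representable by an object A. The assignment X ↦ Hom(A, X), with Aut(A) acting on the right by precomposition and with a morphism f : X ⟶ Y sent to postcomposition with f, defines a functor from C to the category of right Aut(A)-sets and equivariant maps. This functor is fully faithful: every Aut(A)-equivariant map Hom(A, X) → Hom(A, Y) is postcomposition by a unique morphism X ⟶ Y. Moreover each Hom(A, X) is nonempty and the right Aut(A)-action on it is transitive. -/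
open CategoryTheory Opposite

universe u v

/-- If `(C, F)` is a pointed connected atomic site with `F` representable by
`A`, the assignment `X ↦ Hom(A, X)` (with `Aut(A)` acting on the right by
precomposition, and morphisms acting by postcomposition) is a fully faithful
functor from `C` into right `Aut(A)`-sets: postcomposition by any morphism is
equivariant, and every equivariant map `Hom(A, X) → Hom(A, Y)` is
postcomposition by a unique morphism `X ⟶ Y`.  Moreover each `Hom(A, X)` is a
nonempty transitive `Aut(A)`-set. -/
theorem stmt10 {C : Type u} [Category.{v} C] (F : C ⥤ Type v)
    (hF : IsPCAS F) (A : C) (θ : coyoneda.obj (op A) ≅ F) :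
    -- postcomposition is equivariant (functoriality into Aut(A)-sets)
    (∀ {X Y : C} (f : X ⟶ Y) (h : Aut A) (x : A ⟶ X),
      (h.hom ≫ x) ≫ f = h.hom ≫ (x ≫ f)) ∧
    -- full faithfulness: every equivariant map is postcomposition by a
    -- unique morphism
    (∀ (X Y : C) (φ : (A ⟶ X) → (A ⟶ Y)),
      (∀ (h : Aut A) (x : A ⟶ X), φ (h.hom ≫ x) = h.hom ≫ φ x) →
      ∃! f : X ⟶ Y, ∀ x : A ⟶ X, φ x = x ≫ f) ∧
    -- each `Hom(A, X)` is nonempty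
    (∀ X : C, Nonempty (A ⟶ X)) ∧
    -- and the right `Aut(A)`-action on it is transitive
    (∀ (X : C) (x y : A ⟶ X), ∃ h : Aut A, h.hom ≫ x = y) := by
  -- every morphism is an epimorphism
  have epi : ∀ {W Y Z : C} (w : W ⟶ Y) (p q : Y ⟶ Z), w ≫ p = w ≫ q → p = q := by
    intro W Y Z w p q hpq
    obtain ⟨u, hu, huniq⟩ := hF.strict_epi w (w ≫ p) (fun r s h => by
      rw [← Category.assoc, ← Category.assoc, h])
    exact (huniq p rfl).trans (huniq q hpq.symm).symm
  -- each Hom(A, X) is nonempty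
  have nonemp : ∀ X : C, Nonempty (A ⟶ X) := fun X =>
    ⟨θ.inv.app X (hF.nonempty X).some⟩
  -- postcomposition with any morphism is surjective
  have postsurj : ∀ {X Y : C} (f : X ⟶ Y) (y : A ⟶ Y), ∃ x : A ⟶ X, x ≫ f = y := by
    intro X Y f y
    obtain ⟨z, hz⟩ := hF.surjective f (θ.hom.app Y y)
    refine ⟨θ.inv.app X z, ?_⟩
    have h1 : θ.inv.app Y (F.map f z) = θ.inv.app X z ≫ f := NatTrans.naturality_apply θ.inv f z
    rw [← h1, hz]
    simp
  -- every endomorphism of A is an isomorphism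
  have endo : ∀ g : A ⟶ A, ∃ g' : A ⟶ A, g ≫ g' = 𝟙 A ∧ g' ≫ g = 𝟙 A := by
    intro g
    obtain ⟨g', hg'⟩ := postsurj g (𝟙 A)
    refine ⟨g', epi g' _ _ ?_, hg'⟩
    rw [← Category.assoc, hg', Category.id_comp, Category.comp_id]
  -- transitivity
  have htrans : ∀ (X : C) (x y : A ⟶ X), ∃ h : Aut A, h.hom ≫ x = y := by
    intro X x y
    obtain ⟨g, hg⟩ := postsurj x y
    obtain ⟨g', h1, h2⟩ := endo g
    exact ⟨⟨g, g', h1, h2⟩, hg⟩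
  refine ⟨fun f h x => Category.assoc _ _ _, ?_, nonemp, htrans⟩
  intro X Y φ hφ
  obtain ⟨x₀⟩ := nonemp X
  have cond : ∀ {W : C} (p q : W ⟶ A), p ≫ x₀ = q ≫ x₀ → p ≫ φ x₀ = q ≫ φ x₀ := by
    intro W p q hpq
    obtain ⟨w⟩ := nonemp W
    obtain ⟨p', hp1, hp2⟩ := endo (w ≫ p)
    obtain ⟨q', hq1, hq2⟩ := endo (w ≫ q)
    have h1 : φ ((w ≫ p) ≫ x₀) = (w ≫ p) ≫ φ x₀ :=
      hφ (⟨w ≫ p, p', hp1, hp2⟩ : Aut A) x₀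
    have h2 : φ ((w ≫ q) ≫ x₀) = (w ≫ q) ≫ φ x₀ :=
      hφ (⟨w ≫ q, q', hq1, hq2⟩ : Aut A) x₀
    have hx : (w ≫ p) ≫ x₀ = (w ≫ q) ≫ x₀ := by
      simp only [Category.assoc, hpq]
    rw [hx, h2] at h1
    simp only [Category.assoc] at h1
    exact epi w _ _ h1.symm
  obtain ⟨f, hf, -⟩ := hF.strict_epi x₀ (φ x₀) cond
  refine ⟨f, fun x => ?_, fun f' hf' => epi x₀ _ _ (by rw [hf, ← hf' x₀])⟩
  obtain ⟨h, hh⟩ := htrans X x₀ x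
  calc φ x = φ (h.hom ≫ x₀) := by rw [hh]
    _ = h.hom ≫ φ x₀ := hφ h x₀
    _ = h.hom ≫ x₀ ≫ f := by rw [hf]
    _ = x ≫ f := by rw [← Category.assoc, hh]
end

section
/- Let (C, F) be a pointed connected atomic site and (A, a) a Galois pair. Let C_A be the full subcategory of C on those objects X for which the evaluation ev_a : Hom(A, X) → F X, h ↦ F(h)(a), is a bijection. Then the pair (C_A, F restricted to C_A) again satisfies conditions (i)–(iv) of a pointed connected atomic site, and the evaluation maps ev_a assemble into a natural isomorphism between Hom(A, −) restricted to C_A and F restricted to C_A; in particular the restricted functor is representable by A (which belongs to C_A). -/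
open CategoryTheory Opposite

universe u v

/-- The property defining the full subcategory `C_A`: the evaluation
`Hom(A, X) → F X`, `h ↦ F(h)(a)`, is a bijection. -/
def splitByA {C : Type u} [Category.{v} C] (F : C ⥤ Type v)
    (A : C) (a : F.obj A) : C → Prop :=
  fun X => Function.Bijective (fun h : A ⟶ X => F.map h a)

section Aux

variable {C : Type u} [Category.{v} C] {F : C ⥤ Type v}

/-- Every morphism is epi (right-cancellable), from the strict-epi axiom. -/
lemma IsPCAS.cancel (hF : IsPCAS F) {U V Z : C} (r : U ⟶ V) {x y : V ⟶ Z}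
    (h : r ≫ x = r ≫ y) : x = y := by
  obtain ⟨u, -, huniq⟩ := hF.strict_epi r (r ≫ x)
    (fun p q hpq => by rw [← Category.assoc, hpq, Category.assoc])
  exact (huniq x rfl).trans (huniq y h.symm).symm

/-- Pointwise determination of morphisms into an object split by `(A, a)`:
if two parallel morphisms agree on one element, they are equal. -/
lemma IsPCAS.pointwise (hF : IsPCAS F) (A : C) (a : F.obj A)
    {W Z : C} (hZ : Function.Surjective (fun h : A ⟶ Z => F.map h a))
    (p q : W ⟶ Z) (w : F.obj W) (h : F.map p w = F.map q w) : p = q := by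
  haveI := hF.cofiltered
  obtain ⟨V, s, t, -⟩ := IsCofilteredOrEmpty.cone_objs (C := F.Elements) ⟨W, w⟩ ⟨A, a⟩
  obtain ⟨h₁, hh₁⟩ := hZ (F.map p w)
  have key : ∀ r : W ⟶ Z, F.map r w = F.map p w → s.1 ≫ r = t.1 ≫ h₁ := by
    intro r hr
    let m₁ : (V ⟶ (⟨Z, F.map p w⟩ : F.Elements)) :=
      ⟨s.1 ≫ r, by
        have := s.2
        simp only [FunctorToTypes.map_comp_apply]
        rw [show F.map s.val V.snd = w from this, hr]⟩
    let m₂ : (V ⟶ (⟨Z, F.map p w⟩ : F.Elements)) :=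
      ⟨t.1 ≫ h₁, by
        have := t.2
        simp only [FunctorToTypes.map_comp_apply]
        rw [show F.map t.val V.snd = a from this]; exact hh₁⟩
    obtain ⟨U, c, hc⟩ := IsCofilteredOrEmpty.cone_maps m₁ m₂
    have : c.1 ≫ (s.1 ≫ r) = c.1 ≫ (t.1 ≫ h₁) := by
      have h' := congrArg Subtype.val hc
      exact h'
    exact hF.cancel c.1 this
  have e1 := key p rfl
  have e2 := key q h.symm
  exact hF.cancel s.1 (e1.trans e2.symm)

end Aux

/-- For a pointed connected atomic site `(C, F)` and a Galois pair `(A, a)`,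
the full subcategory `C_A` of objects split by `(A, a)`, with `F` restricted
to it, is again a pointed connected atomic site, `A` belongs to `C_A`, and the
evaluation maps at `a` assemble into a natural isomorphism
`Hom(A, −)|_{C_A} ≅ F|_{C_A}`, so the restricted functor is representable
by `A`. -/

theorem stmt15 {C : Type u} [Category.{v} C] (F : C ⥤ Type v)
    (hF : IsPCAS F) (A : C) (a : F.obj A)
    (hGal : Function.Bijective (fun h : A ⟶ A => F.map h a)) :
    -- `A` belongs to `C_A`
    splitByA F A a A ∧
    -- `(C_A, F|_{C_A})` satisfies conditions (i)-(iv)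
    IsPCAS (ObjectProperty.ι (splitByA F A a) ⋙ F) ∧
    -- the evaluations assemble into a natural isomorphism exhibiting
    -- representability of the restriction by `A`
    ∃ θ : coyoneda.obj (op (⟨A, hGal⟩ : ObjectProperty.FullSubcategory (splitByA F A a))) ≅
        ObjectProperty.ι (splitByA F A a) ⋙ F,
      ∀ (X : ObjectProperty.FullSubcategory (splitByA F A a))
        (h : (⟨A, hGal⟩ : ObjectProperty.FullSubcategory (splitByA F A a)) ⟶ X),
        θ.hom.app X h =
          F.map ((ObjectProperty.ι (splitByA F A a)).map h) a := by
  classical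
  refine ⟨hGal, ?_, ?_⟩
  · set S := splitByA F A a with hS
    constructor
    · -- strict epi
      intro Y X Z f g hyp
      have full : ∀ {W' : C} (p q : W' ⟶ Y.obj),
          p ≫ f.hom = q ≫ f.hom → p ≫ g.hom = q ≫ g.hom := by
        intro W' p q hpf
        obtain ⟨w⟩ := hF.nonempty W'
        obtain ⟨h₁, hh₁⟩ := Y.property.2 (F.map p w)
        obtain ⟨h₂, hh₂⟩ := Y.property.2 (F.map q w)
        have hX : (h₁ ≫ f.hom : A ⟶ X.obj) = h₂ ≫ f.hom := by
          apply X.property.1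
          show F.map (h₁ ≫ f.hom) a = F.map (h₂ ≫ f.hom) a
          simp only [FunctorToTypes.map_comp_apply]
          rw [show F.map h₁ a = F.map p w from hh₁, show F.map h₂ a = F.map q w from hh₂, ← FunctorToTypes.map_comp_apply,
            ← FunctorToTypes.map_comp_apply, hpf]
        have hZ : (h₁ ≫ g.hom : A ⟶ Z.obj) = h₂ ≫ g.hom :=
          congrArg InducedCategory.Hom.hom (hyp (W := ⟨A, hGal⟩) ⟨h₁⟩ ⟨h₂⟩ (InducedCategory.hom_ext hX))
        apply hF.pointwise A a Z.property.2 _ _ w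
        show F.map (p ≫ g.hom) w = F.map (q ≫ g.hom) w
        simp only [FunctorToTypes.map_comp_apply]
        rw [← show F.map h₁ a = F.map p w from hh₁, ← show F.map h₂ a = F.map q w from hh₂, ← FunctorToTypes.map_comp_apply,
          ← FunctorToTypes.map_comp_apply, hZ]
      obtain ⟨u, hu, huniq⟩ := hF.strict_epi f.hom g.hom (fun p q h => full p q h)
      exact ⟨⟨u⟩, InducedCategory.hom_ext hu, fun v hv => InducedCategory.hom_ext (huniq v.hom (congrArg InducedCategory.Hom.hom hv))⟩
    · intro X; exact hF.nonempty X.obj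
    · intro X Y f; exact hF.surjective f.hom
    · -- cofiltered
      refine { nonempty := ⟨⟨⟨A, hGal⟩, a⟩⟩, cone_objs := ?_, cone_maps := ?_ }
      · intro X Y
        obtain ⟨h₁, hh₁⟩ := X.1.property.2 X.2
        obtain ⟨h₂, hh₂⟩ := Y.1.property.2 Y.2
        exact ⟨⟨⟨A, hGal⟩, a⟩, ⟨⟨h₁⟩, hh₁⟩, ⟨⟨h₂⟩, hh₂⟩, trivial⟩
      · intro X Y f g
        have : f.1.hom = g.1.hom := by
          apply hF.pointwise A a Y.1.property.2 _ _ X.2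
          rw [show F.map f.val.hom X.snd = Y.snd from f.2,
            show F.map g.val.hom X.snd = Y.snd from g.2]
        refine ⟨X, 𝟙 X, ?_⟩
        ext
        show (𝟙 X ≫ f).1.hom = (𝟙 X ≫ g).1.hom
        simp [this]
  · refine ⟨NatIso.ofComponents
      (fun X => Equiv.toIso (Equiv.ofBijective (fun h : (⟨A, hGal⟩ : ObjectProperty.FullSubcategory (splitByA F A a)) ⟶ X => F.map h.hom a) (X.property.comp InducedCategory.homEquiv.bijective))) ?_, ?_⟩
    · intro X Y f
      ext h
      show F.map (h.hom ≫ f.hom) a = F.map f.hom (F.map h.hom a)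
      rw [FunctorToTypes.map_comp_apply]
    · intro X h
      rfl
end
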